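/- Let τ = Σ_{i,j} τ_{ij} (E_{ij} ⊗ E_{ij}) be a maximally correlated state on ℂ^n ⊗ ℂ^n and let σ = Σ_i τ_{ii} (E_{ii} ⊗ E_{ii}) be its diagonal part in the computational product basis. Then the negativity of τ satisfies N(τ) = (1/2)‖τ − σ‖_{l1}, where the entrywise l1-norm is taken in the computational product basis. -/

import Mathlib

open scoped Kronecker ComplexOrder
open Matrix

noncomputable def traceNorm {ι : Type*} [Fintype ι] [DecidableEq ι] (A : Matrix ι ι ℂ) : ℝ :=
  (((Matrix.posSemidef_conjTranspose_mul_self A).1.eigenvectorUnitary.1 *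
      Matrix.diagonal ((fun x : ℝ => (x : ℂ)) ∘ Real.sqrt ∘ (Matrix.posSemidef_conjTranspose_mul_self A).1.eigenvalues) *
      (star (Matrix.posSemidef_conjTranspose_mul_self A).1.eigenvectorUnitary :
        Matrix ι ι ℂ)).trace).re


noncomputable def l1Norm {ι κ : Type*} [Fintype ι] [Fintype κ] (A : Matrix ι κ ℂ) : ℝ :=
  ∑ i, ∑ j, ‖A i j‖

def ptranspose {α β : Type*} (ρ : Matrix (α × β) (α × β) ℂ) : Matrix (α × β) (α × β) ℂ :=
  Matrix.of fun p q => ρ (p.1, q.2) (q.1, p.2)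

noncomputable def negativity {α β : Type*} [Fintype α] [Fintype β] [DecidableEq α] [DecidableEq β]
    (ρ : Matrix (α × β) (α × β) ℂ) : ℝ :=
  (traceNorm (ptranspose ρ) - 1) / 2

def matUnit {ι : Type*} [DecidableEq ι] (i j : ι) : Matrix ι ι ℂ :=
  Matrix.single i j 1

noncomputable def mcs {n : ℕ} (t : Fin n → Fin n → ℂ) :
    Matrix (Fin n × Fin n) (Fin n × Fin n) ℂ :=
  ∑ i, ∑ j, t i j • (matUnit i j ⊗ₖ matUnit i j)

def blockOf {m n : ℕ} (ρ : Matrix (Fin m × Fin n) (Fin m × Fin n) ℂ) (i j : Fin m) :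
    Matrix (Fin n) (Fin n) ℂ :=
  Matrix.of fun k l => ρ (i, k) (j, l)

noncomputable def conjU {m n : ℕ} (U : Matrix.unitaryGroup (Fin m) ℂ)
    (ρ : Matrix (Fin m × Fin n) (Fin m × Fin n) ℂ) : Matrix (Fin m × Fin n) (Fin m × Fin n) ℂ :=
  ((U : Matrix (Fin m) (Fin m) ℂ) ⊗ₖ (1 : Matrix (Fin n) (Fin n) ℂ))ᴴ * ρ *
    ((U : Matrix (Fin m) (Fin m) ℂ) ⊗ₖ (1 : Matrix (Fin n) (Fin n) ℂ))

noncomputable def conjUV {m n : ℕ} (U : Matrix.unitaryGroup (Fin m) ℂ)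
    (V : Matrix.unitaryGroup (Fin n) ℂ)
    (ρ : Matrix (Fin m × Fin n) (Fin m × Fin n) ℂ) : Matrix (Fin m × Fin n) (Fin m × Fin n) ℂ :=
  ((U : Matrix (Fin m) (Fin m) ℂ) ⊗ₖ (V : Matrix (Fin n) (Fin n) ℂ))ᴴ * ρ *
    ((U : Matrix (Fin m) (Fin m) ℂ) ⊗ₖ (V : Matrix (Fin n) (Fin n) ℂ))

noncomputable def QNA {m n : ℕ} (ρ : Matrix (Fin m × Fin n) (Fin m × Fin n) ℂ) : ℝ :=
  ⨅ U : Matrix.unitaryGroup (Fin m) ℂ,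
    ((∑ i, ∑ j, traceNorm (blockOf (conjU U ρ) i j)) - 1) / 2

noncomputable def QNAB {m n : ℕ} (ρ : Matrix (Fin m × Fin n) (Fin m × Fin n) ℂ) : ℝ :=
  ⨅ U : Matrix.unitaryGroup (Fin m) ℂ, ⨅ V : Matrix.unitaryGroup (Fin n) ℂ,
    (l1Norm (conjUV U V ρ) - 1) / 2

/-- The diagonal part `σ = Σ_i τ_{ii} (E_{ii} ⊗ E_{ii})` of a maximally correlated state. -/
noncomputable def mcsDiag {n : ℕ} (t : Fin n → Fin n → ℂ) :
    Matrix (Fin n × Fin n) (Fin n × Fin n) ℂ :=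
  ∑ i, t i i • (matUnit i i ⊗ₖ matUnit i i)


section helpers
variable {n : ℕ}
open scoped MatrixOrder

lemma mcs_apply (t : Fin n → Fin n → ℂ) (a b c d : Fin n) :
    mcs t (a, b) (c, d) = if a = b ∧ c = d then t a c else 0 := by
  simp only [mcs, Matrix.sum_apply, Matrix.smul_apply, Matrix.kroneckerMap_apply,
    matUnit, Matrix.single, smul_eq_mul]
  simp only [Matrix.of_apply]
  rw [Finset.sum_eq_single a, Finset.sum_eq_single c] <;> aesop

lemma mcsDiag_apply (t : Fin n → Fin n → ℂ) (a b c d : Fin n) :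
    mcsDiag t (a, b) (c, d) = if a = b ∧ c = d ∧ a = c then t a a else 0 := by
  simp only [mcsDiag, Matrix.sum_apply, Matrix.smul_apply, Matrix.kroneckerMap_apply,
    matUnit, Matrix.single, smul_eq_mul, Matrix.of_apply]
  rw [Finset.sum_eq_single a]
  · by_cases h1 : a = b
    · subst h1
      by_cases h2 : a = c
      · subst h2
        by_cases h3 : a = d
        · subst h3; simp
        · simp [h3]
      · simp [h2]
    · simp [h1]
  · intro x _ hx
    split_ifs <;> simp_all
  · simp

lemma pt_apply (t : Fin n → Fin n → ℂ) (a b c d : Fin n) :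
    ptranspose (mcs t) (a, b) (c, d) = if a = d ∧ c = b then t a c else 0 := by
  simp [ptranspose, mcs_apply]

lemma key (t : Fin n → Fin n → ℂ) :
    (ptranspose (mcs t))ᴴ * (ptranspose (mcs t)) =
      (Matrix.diagonal (fun p : Fin n × Fin n => (‖t p.2 p.1‖ : ℂ))) ^ 2 := by
  rw [pow_two, Matrix.diagonal_mul_diagonal]
  ext ⟨a, b⟩ ⟨c, d⟩
  rw [Matrix.mul_apply, Finset.sum_eq_single ((b, a) : Fin n × Fin n)]
  · simp only [Matrix.conjTranspose_apply, pt_apply, Matrix.diagonal_apply,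
      eq_self_iff_true, and_self, if_true]
    by_cases h : a = c ∧ b = d
    · obtain ⟨rfl, rfl⟩ := h
      rw [if_pos ⟨rfl, rfl⟩, if_pos rfl]
      rw [RCLike.star_def, mul_comm, Complex.mul_conj']
      ring
    · rw [if_neg, mul_zero, if_neg]
      · rintro hh; rw [Prod.mk.injEq] at hh; exact h hh
      · rintro ⟨rfl, rfl⟩; exact h ⟨rfl, rfl⟩
  · rintro ⟨x, y⟩ - hxy
    simp only [Matrix.conjTranspose_apply, pt_apply]
    rw [if_neg, star_zero, zero_mul]
    rintro ⟨rfl, rfl⟩; exact hxy rfl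
  · simp

lemma traceNorm_pt (t : Fin n → Fin n → ℂ) :
    traceNorm (ptranspose (mcs t)) = ∑ a : Fin n, ∑ b : Fin n, ‖t a b‖ := by
  have hD : (Matrix.diagonal
      (fun p : Fin n × Fin n => (‖t p.2 p.1‖ : ℂ))).PosSemidef := by
    refine Matrix.posSemidef_diagonal_iff.mpr fun p => ?_
    exact_mod_cast Complex.zero_le_real.mpr (norm_nonneg _)
  have hsq := (Matrix.posSemidef_conjTranspose_mul_self (ptranspose (mcs t)))
  have heq : Matrix.diagonal (fun p : Fin n × Fin n => (‖t p.2 p.1‖ : ℂ))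
      = hsq.1.eigenvectorUnitary.1 *
      Matrix.diagonal ((fun x : ℝ => (x : ℂ)) ∘ Real.sqrt ∘ hsq.1.eigenvalues) *
      (star hsq.1.eigenvectorUnitary : Matrix (Fin n × Fin n) (Fin n × Fin n) ℂ) := by
    have h1 : hsq.1.eigenvectorUnitary.1 *
        Matrix.diagonal ((fun x : ℝ => (x : ℂ)) ∘ Real.sqrt ∘ hsq.1.eigenvalues) *
        (star hsq.1.eigenvectorUnitary : Matrix (Fin n × Fin n) (Fin n × Fin n) ℂ)
        = cfc Real.sqrt ((ptranspose (mcs t))ᴴ * ptranspose (mcs t)) := by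
      rw [hsq.1.cfc_eq, IsHermitian.cfc, Unitary.conjStarAlgAut_apply]; rfl
    have h0 : (0 : Matrix (Fin n × Fin n) (Fin n × Fin n) ℂ) ≤
        (ptranspose (mcs t))ᴴ * ptranspose (mcs t) := nonneg_iff_posSemidef.mpr hsq
    rw [h1, ← cfcₙ_eq_cfc, ← CFC.sqrt_eq_real_sqrt _ h0]
    exact (CFC.sqrt_unique (by rw [key t, pow_two]) (nonneg_iff_posSemidef.mpr hD)).symm
  unfold traceNorm
  rw [← heq, Matrix.trace_diagonal]
  rw [Complex.re_sum]
  rw [Fintype.sum_prod_type]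
  simp only [Complex.ofReal_re]
  rw [Finset.sum_comm]

end helpers

/-- the negativity of a maximally correlated state is half the entrywise
l1-distance from its diagonal part in the computational product basis. -/
theorem stmt_4 {n : ℕ} (t : Fin n → Fin n → ℂ)
    (hpos : (mcs t).PosSemidef) (htr : (mcs t).trace = 1) :
    negativity (mcs t) = (1/2) * l1Norm (mcs t - mcsDiag t) := by
  -- diagonal entries are nonneg
  have hd : ∀ a : Fin n, 0 ≤ t a a := by
    intro a
    have h := hpos.dotProduct_mulVec_nonneg (Pi.single (a, a) 1)
    rwa [Matrix.mulVec_single_one, dotProduct, Fintype.sum_eq_single (a, a)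
      (fun p hp => by simp [Pi.single_apply, hp]), Pi.star_apply, Pi.single_eq_same,
      star_one, one_mul, Matrix.col_apply, mcs_apply, if_pos ⟨rfl, rfl⟩] at h
  have habs : ∀ a : Fin n, (‖t a a‖ : ℝ) = (t a a).re := by
    intro a
    obtain ⟨hre, him⟩ := Complex.nonneg_iff.mp (hd a)
    rw [Complex.norm_def, Complex.normSq_apply, ← him, mul_zero, add_zero,
      Real.sqrt_mul_self hre]
  -- the trace condition
  have hsum : ∑ a : Fin n, (t a a).re = 1 := by
    have h1 : (mcs t).trace = ∑ a : Fin n, t a a := by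
      rw [Matrix.trace, Fintype.sum_prod_type]
      simp [Matrix.diag_apply, mcs_apply]
    rw [h1] at htr
    have := congrArg Complex.re htr
    rwa [Complex.re_sum] at this
  -- compute the l1 norm of the difference
  have hdiff : ∀ a b c d : Fin n, ‖(mcs t - mcsDiag t) (a, b) (c, d)‖ =
      if b = a then (if d = c then (if a = c then 0 else ‖t a c‖) else 0) else 0 := by
    intro a b c d
    rw [Matrix.sub_apply, mcs_apply, mcsDiag_apply]
    by_cases h1 : a = b <;> by_cases h2 : c = d <;> by_cases h3 : a = c <;>
      simp [h1, h2, h3, eq_comm] <;> simp_all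
  have hl1 : l1Norm (mcs t - mcsDiag t) =
      (∑ a : Fin n, ∑ c : Fin n, ‖t a c‖) - ∑ a : Fin n, (t a a).re := by
    unfold l1Norm
    simp only [Fintype.sum_prod_type]
    simp only [hdiff, Finset.sum_ite_irrel, Finset.sum_const_zero, Finset.sum_ite_eq',
      Finset.mem_univ, if_true]
    have : ∀ a c : Fin n, (if a = c then 0 else ‖t a c‖) =
        ‖t a c‖ - (if c = a then (t a a).re else 0) := by
      intro a c
      by_cases h : a = c
      · subst h; simp [habs a]
      · simp [h, Ne.symm h]
    simp only [this, Finset.sum_sub_distrib, Finset.sum_ite_eq', Finset.mem_univ, if_true]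
  rw [negativity, traceNorm_pt, hl1, hsum]
  ring
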